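/- Let F be a real vector space, let λ₁,…,λ_m be linear functionals on F with observation map Λ(f) = (λ₁(f),…,λ_m(f)), and let K ⊆ F be a convex set containing 0. Let γ_i be linear functionals on F, and suppose γ : F → ℝ admits the two representations γ(f) = sup_{a∈A} inf_{i∈I_a} γ_i(f) = inf_{b∈B} sup_{j∈J_b} γ_j(f) for all f ∈ F, where A, B and the I_a, J_b are nonempty index sets and all suprema and infima are finite. Assume e_♭ := sup{ (γ(f′) − γ(f″))/2 : f′, f″ ∈ K, Λ(f′) = Λ(f″) } is finite. Then for every a⋆ ∈ A and b⋆ ∈ B there exists a vector c ∈ ℝ^m such that for all f′, f″ ∈ K: ( inf_{i∈I_{a⋆}} γ_i(f′) − Σ_{k=1}^m c_k λ_k(f′) ) − ( sup_{j∈J_{b⋆}} γ_j(f″) − Σ_{k=1}^m c_k λ_k(f″) ) ≤ 2 e_♭. -/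

import Mathlib

/-- One-dimensional correction step. -/
lemma one_step_aux (α : ℝ) (W : Set (ℝ × ℝ)) (hW : Convex ℝ W)
    (hsymm : ∀ p ∈ W, ∃ t : ℝ, (-p.1, t) ∈ W)
    (h0 : ∀ s : ℝ, ((0 : ℝ), s) ∈ W → s ≤ α) :
    ∃ t : ℝ, ∀ p ∈ W, p.2 ≤ α + t * p.1 := by
  by_cases hpos : ∃ p ∈ W, 0 < p.1
  · obtain ⟨q, hqW, hq⟩ := hpos
    obtain ⟨tq, htq⟩ := hsymm q hqW
    have pair : ∀ p ∈ W, 0 < p.1 → ∀ r ∈ W, r.1 < 0 →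
        (p.2 - α) / p.1 ≤ (r.2 - α) / r.1 := by
      rintro ⟨p1, p2⟩ hp hp1 ⟨r1, r2⟩ hr hr1
      simp only at hp1 hr1 ⊢
      have hd : 0 < p1 - r1 := by linarith
      set θ : ℝ := -r1 / (p1 - r1) with hθdef
      have hθ0 : 0 ≤ θ := div_nonneg (by linarith) (by linarith)
      have hθ1 : 0 ≤ 1 - θ := by
        have : θ ≤ 1 := by
          rw [div_le_one hd]; linarith
        linarith
      have hmem := hW hp hr hθ0 hθ1 (by ring)
      have hfst : θ * p1 + (1 - θ) * r1 = 0 := by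
        field_simp [hθdef]
        have hθp' : θ * (p1 - r1) = -r1 := by rw [hθdef]; exact div_mul_cancel₀ _ hd.ne'
        linear_combination hθp'
      have hcombo : θ • ((p1, p2) : ℝ × ℝ) + (1 - θ) • ((r1, r2) : ℝ × ℝ)
          = ((0 : ℝ), θ * p2 + (1 - θ) * r2) := by
        simp [Prod.ext_iff, smul_eq_mul, hfst]
      rw [hcombo] at hmem
      have hkey : θ * p2 + (1 - θ) * r2 ≤ α := h0 _ hmem
      -- derive the division inequality
      rw [div_le_iff₀ hp1, div_mul_eq_mul_div, le_div_iff_of_neg hr1]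
      -- goal : (r2 - α) * p1 ≤ (p2 - α) * r1
      have hθp : θ * (p1 - r1) = -r1 := by rw [hθdef]; exact div_mul_cancel₀ _ hd.ne'
      have hθq : (1 - θ) * (p1 - r1) = p1 := by rw [sub_mul, one_mul, hθp]; ring
      have hmul := mul_le_mul_of_nonneg_right hkey hd.le
      have e1 : (θ * p2 + (1 - θ) * r2) * (p1 - r1)
          = (θ * (p1 - r1)) * p2 + ((1 - θ) * (p1 - r1)) * r2 := by ring
      rw [e1, hθp, hθq] at hmul
      linarith
    set S : Set ℝ := {x : ℝ | ∃ p ∈ W, 0 < p.1 ∧ x = (p.2 - α) / p.1} with hSdef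
    have hSne : S.Nonempty := ⟨(q.2 - α) / q.1, q, hqW, hq, rfl⟩
    have hSbdd : BddAbove S := by
      refine ⟨(tq - α) / (-q.1), ?_⟩
      rintro x ⟨p, hp, hp1, rfl⟩
      exact pair p hp hp1 (-q.1, tq) htq (show -q.1 < 0 by linarith)
    refine ⟨sSup S, ?_⟩
    rintro ⟨p1, p2⟩ hp
    simp only
    rcases lt_trichotomy p1 0 with h | h | h
    · have hle : sSup S ≤ (p2 - α) / p1 := by
        apply csSup_le hSne
        rintro x ⟨r, hr, hr1, rfl⟩
        exact pair r hr hr1 (p1, p2) hp h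
      rw [le_div_iff_of_neg h] at hle
      linarith
    · subst h
      have := h0 p2 hp
      linarith
    · have hle : (p2 - α) / p1 ≤ sSup S := le_csSup hSbdd ⟨(p1, p2), hp, h, rfl⟩
      rw [div_le_iff₀ h] at hle
      linarith
  · push_neg at hpos
    refine ⟨0, ?_⟩
    rintro ⟨p1, p2⟩ hp
    have h1 : p1 ≤ 0 := hpos _ hp
    have h2 : p1 = 0 := by
      rcases eq_or_lt_of_le h1 with h | h
      · exact h
      · obtain ⟨t, ht⟩ := hsymm _ hp
        have := hpos _ ht
        simp only at this ⊢
        linarith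
    subst h2
    have := h0 p2 hp
    simp only
    linarith

/-- Correction over a finite set of coordinates, by induction. -/
lemma key_aux {m : ℕ} (α : ℝ) (S : Finset (Fin m)) :
    ∀ (T : Set ((Fin m → ℝ) × ℝ)), Convex ℝ T →
    (∀ p ∈ T, ∃ t : ℝ, (-p.1, t) ∈ T) →
    (∀ p ∈ T, (∀ k ∈ S, p.1 k = 0) → p.2 ≤ α) →
    ∃ c : Fin m → ℝ, ∀ p ∈ T, p.2 ≤ α + ∑ k ∈ S, c k * p.1 k := by
  induction S using Finset.induction with
  | empty =>
    intro T hT hsymm h0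
    exact ⟨0, fun p hp => by simpa using h0 p hp (by simp)⟩
  | @insert k S hk IH =>
    intro T hT hsymm h0
    -- slice in the k-th coordinate over the part of T vanishing on S
    set W : Set (ℝ × ℝ) :=
      {w : ℝ × ℝ | ∃ p ∈ T, (∀ j ∈ S, p.1 j = 0) ∧ w = (p.1 k, p.2)} with hWdef
    have hWconv : Convex ℝ W := by
      rintro w ⟨p, hp, hpS, rfl⟩ w' ⟨p', hp', hpS', rfl⟩ a b ha hb hab
      refine ⟨a • p + b • p', hT hp hp' ha hb hab, ?_, ?_⟩
      · intro j hj
        simp [hpS j hj, hpS' j hj]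
      · simp [Prod.ext_iff, smul_eq_mul]
    have hWsymm : ∀ w ∈ W, ∃ t : ℝ, (-w.1, t) ∈ W := by
      rintro w ⟨p, hp, hpS, rfl⟩
      obtain ⟨t, ht⟩ := hsymm p hp
      exact ⟨t, ⟨(-p.1, t), ht, fun j hj => by simp [hpS j hj], by simp⟩⟩
    have hW0 : ∀ s : ℝ, ((0 : ℝ), s) ∈ W → s ≤ α := by
      rintro s ⟨p, hp, hpS, hps⟩
      have h1 : p.1 k = 0 := (Prod.ext_iff.mp hps).1.symm
      have h2 : s = p.2 := (Prod.ext_iff.mp hps).2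
      rw [h2]
      refine h0 p hp ?_
      intro j hj
      rcases Finset.mem_insert.mp hj with rfl | hj'
      · exact h1
      · exact hpS j hj'
    obtain ⟨t, htW⟩ := one_step_aux α W hWconv hWsymm hW0
    -- correct by `t` in coordinate `k`, then induct
    set T' : Set ((Fin m → ℝ) × ℝ) :=
      (fun p : (Fin m → ℝ) × ℝ => (p.1, p.2 - t * p.1 k)) '' T with hT'def
    have hT'conv : Convex ℝ T' := by
      rintro q ⟨p, hp, rfl⟩ q' ⟨p', hp', rfl⟩ a b ha hb hab
      refine ⟨a • p + b • p', hT hp hp' ha hb hab, ?_⟩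
      simp [Prod.ext_iff, smul_eq_mul]
      ring
    have hT'symm : ∀ q ∈ T', ∃ s : ℝ, (-q.1, s) ∈ T' := by
      rintro q ⟨p, hp, rfl⟩
      obtain ⟨s, hs⟩ := hsymm p hp
      exact ⟨s - t * (-p.1) k, ⟨(-p.1, s), hs, rfl⟩⟩
    have hT'0 : ∀ q ∈ T', (∀ j ∈ S, q.1 j = 0) → q.2 ≤ α := by
      rintro q ⟨p, hp, rfl⟩ hqS
      have := htW (p.1 k, p.2) ⟨p, hp, hqS, rfl⟩
      simp only at this ⊢
      linarith
    obtain ⟨c, hc⟩ := IH T' hT'conv hT'symm hT'0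
    refine ⟨Function.update c k t, ?_⟩
    intro p hp
    have hmem : (p.1, p.2 - t * p.1 k) ∈ T' := ⟨p, hp, rfl⟩
    have h1 := hc _ hmem
    simp only at h1
    rw [Finset.sum_insert hk]
    have h2 : ∑ j ∈ S, Function.update c k t j * p.1 j = ∑ j ∈ S, c j * p.1 j := by
      apply Finset.sum_congr rfl
      intro j hj
      rw [Function.update_of_ne (by rintro rfl; exact hk hj)]
    rw [h2, Function.update_self]
    linarith


/-- **Dominated-extension step in the construction of an optimal sup-inf-affine
estimation functional.** Under the hypotheses of the sup-inf theorem (finite sup-inf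
and inf-sup representations of `γ`, convex `K` containing `0`, finite `eflat`), for
all `a, b` there is a correction `c ∈ ℝ^m` by the observation functionals making the
two-point inequality between `inf_{i ∈ I_a} γ i` and `sup_{j ∈ J_b} γ j` hold on
`K × K` with slack `2 eflat`. -/
theorem stmt_16 {F : Type*} [AddCommGroup F] [Module ℝ F] {m : ℕ}
    (lam : Fin m → F →ₗ[ℝ] ℝ)
    (K : Set F) (hK : Convex ℝ K) (h0K : (0 : F) ∈ K)
    {ι A B : Type*} [Nonempty A] [Nonempty B]
    (γi : ι → F →ₗ[ℝ] ℝ)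
    (Ia : A → Set ι) (hIa : ∀ a, (Ia a).Nonempty)
    (Jb : B → Set ι) (hJb : ∀ b, (Jb b).Nonempty)
    (ginf : A → F → ℝ) (hginf : ∀ a f, IsGLB ((fun i => γi i f) '' Ia a) (ginf a f))
    (gsup : B → F → ℝ) (hgsup : ∀ b f, IsLUB ((fun j => γi j f) '' Jb b) (gsup b f))
    (γ : F → ℝ)
    (hγ1 : ∀ f, IsLUB (Set.range fun a => ginf a f) (γ f))
    (hγ2 : ∀ f, IsGLB (Set.range fun b => gsup b f) (γ f))
    (eflat : ℝ)
    (heflat : IsLUB {x : ℝ | ∃ f' ∈ K, ∃ f'' ∈ K,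
        (∀ k, lam k f' = lam k f'') ∧ x = (γ f' - γ f'') / 2} eflat) :
    ∀ (a : A) (b : B), ∃ c : Fin m → ℝ, ∀ f' ∈ K, ∀ f'' ∈ K,
      (ginf a f' - ∑ k, c k * lam k f') - (gsup b f'' - ∑ k, c k * lam k f'') ≤
        2 * eflat := by
  intro a b
  -- basic sandwich facts
  have hle1 : ∀ f, ginf a f ≤ γ f := fun f => (hγ1 f).1 ⟨a, rfl⟩
  have hle2 : ∀ f, γ f ≤ gsup b f := fun f => (hγ2 f).1 ⟨b, rfl⟩
  -- concavity of ginf a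
  have hconc : ∀ (x y : F) (s u : ℝ), 0 ≤ s → 0 ≤ u → s + u = 1 →
      s * ginf a x + u * ginf a y ≤ ginf a (s • x + u • y) := by
    intro x y s u hs hu hsu
    refine (hginf a (s • x + u • y)).2 ?_
    rintro z ⟨i, hi, rfl⟩
    have h1 : ginf a x ≤ γi i x := (hginf a x).1 ⟨i, hi, rfl⟩
    have h2 : ginf a y ≤ γi i y := (hginf a y).1 ⟨i, hi, rfl⟩
    simp only [map_add, map_smul, smul_eq_mul]
    have := mul_le_mul_of_nonneg_left h1 hs
    have := mul_le_mul_of_nonneg_left h2 hu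
    linarith
  -- convexity of gsup b
  have hcvx : ∀ (x y : F) (s u : ℝ), 0 ≤ s → 0 ≤ u → s + u = 1 →
      gsup b (s • x + u • y) ≤ s * gsup b x + u * gsup b y := by
    intro x y s u hs hu hsu
    refine (hgsup b (s • x + u • y)).2 ?_
    rintro z ⟨j, hj, rfl⟩
    have h1 : γi j x ≤ gsup b x := (hgsup b x).1 ⟨j, hj, rfl⟩
    have h2 : γi j y ≤ gsup b y := (hgsup b y).1 ⟨j, hj, rfl⟩
    simp only [map_add, map_smul, smul_eq_mul]
    have := mul_le_mul_of_nonneg_left h1 hs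
    have := mul_le_mul_of_nonneg_left h2 hu
    linarith
  -- the kernel bound
  have hker : ∀ f' ∈ K, ∀ f'' ∈ K, (∀ k, lam k f' = lam k f'') →
      γ f' - γ f'' ≤ 2 * eflat := by
    intro f' hf' f'' hf'' hk
    have := heflat.1 ⟨f', hf', f'', hf'', hk, rfl⟩
    linarith
  -- the convex shadow set
  set T : Set ((Fin m → ℝ) × ℝ) :=
    {p | ∃ f' ∈ K, ∃ f'' ∈ K, p.1 = (fun k => lam k f' - lam k f'') ∧
        p.2 ≤ ginf a f' - gsup b f''} with hTdef
  have hTconv : Convex ℝ T := by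
    rintro p ⟨f1, hf1, f2, hf2, hp1, hp2⟩ q ⟨g1, hg1, g2, hg2, hq1, hq2⟩ s u hs hu hsu
    refine ⟨s • f1 + u • g1, hK hf1 hg1 hs hu hsu,
            s • f2 + u • g2, hK hf2 hg2 hs hu hsu, ?_, ?_⟩
    · funext k
      simp [hp1, hq1, map_add, map_smul, smul_eq_mul]
      ring
    · have hA := hconc f1 g1 s u hs hu hsu
      have hB := hcvx f2 g2 s u hs hu hsu
      have h1 := mul_le_mul_of_nonneg_left hp2 hs
      have h2 := mul_le_mul_of_nonneg_left hq2 hu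
      simp only [Prod.snd_add, Prod.smul_snd, smul_eq_mul]
      linarith
  have hTsymm : ∀ p ∈ T, ∃ t : ℝ, (-p.1, t) ∈ T := by
    rintro p ⟨f1, hf1, f2, hf2, hp1, hp2⟩
    refine ⟨ginf a f2 - gsup b f1, f2, hf2, f1, hf1, ?_, le_rfl⟩
    funext k
    simp [hp1]
  have hT0 : ∀ p ∈ T, (∀ k ∈ (Finset.univ : Finset (Fin m)), p.1 k = 0) →
      p.2 ≤ 2 * eflat := by
    rintro p ⟨f1, hf1, f2, hf2, hp1, hp2⟩ hz
    have hkk : ∀ k, lam k f1 = lam k f2 := by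
      intro k
      have := hz k (Finset.mem_univ k)
      rw [hp1] at this
      have h' : lam k f1 - lam k f2 = 0 := this
      linarith
    have := hker f1 hf1 f2 hf2 hkk
    have h1 := hle1 f1
    have h2 := hle2 f2
    linarith
  obtain ⟨c, hc⟩ := key_aux (2 * eflat) Finset.univ T hTconv hTsymm hT0
  refine ⟨c, ?_⟩
  intro f' hf' f'' hf''
  have hmem : ((fun k => lam k f' - lam k f''), ginf a f' - gsup b f'') ∈ T :=
    ⟨f', hf', f'', hf'', rfl, le_rfl⟩
  have h1 := hc _ hmem
  simp only at h1
  have h2 : ∑ k, c k * (lam k f' - lam k f'') =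
      (∑ k, c k * lam k f') - ∑ k, c k * lam k f'' := by
    rw [← Finset.sum_sub_distrib]
    apply Finset.sum_congr rfl
    intro k _
    ring
  rw [h2] at h1
  linarith
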